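/- Let n ≥ 3 be an integer and let γ(t) = Σ_{ℓ≥0} c_ℓ t^ℓ be a formal power series over K with c₀ = 1, v(c₂) = n, v(c₁²/c₂ − 2^{n+1}·i) ≥ n + 2, and v(c_ℓ) > n + (1/2)·S(ℓ) for all ℓ ≥ 3. Then there exists a formal power series δ(t) = Σ_{ℓ≥0} d_ℓ t^ℓ over K with δ(t)^{2^{n−2}} = γ(t), d₀ = 1, v(d₂) = 2, v(d₁²/d₂ − 8i) ≥ 4, and v(d_ℓ) > 2 + (1/2)·S(ℓ) for all ℓ ≥ 3. In particular, v(d₁) = 5/2. -/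

import Mathlib

/-- `S ℓ` is the sum of the digits of `ℓ` in base 2. -/
def S (ℓ : ℕ) : ℕ := (Nat.digits 2 ℓ).sum

lemma S_one : S 1 = 1 := by simp [S]
lemma S_two : S 2 = 1 := by simp [S]
lemma S_four : S 4 = 1 := by simp [S]

lemma S_pos {j : ℕ} (hj : 1 ≤ j) : 1 ≤ S j := by
  induction j using Nat.strong_induction_on with
  | _ j ih =>
    match j, hj with
    | (j+1), _ =>
      have hd : Nat.digits 2 (j+1) = (j+1) % 2 :: Nat.digits 2 ((j+1)/2) :=
        Nat.digits_def' (by norm_num) (Nat.succ_pos j)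
      unfold S
      rw [hd, List.sum_cons]
      rcases Nat.even_or_odd (j+1) with he | ho
      · have h2 : (j+1)/2 < j+1 := Nat.div_lt_self (Nat.succ_pos j) one_lt_two
        have h1 : 1 ≤ (j+1)/2 := by
          obtain ⟨m, hm⟩ := he; omega
        have := ih _ h2 h1
        unfold S at this
        omega
      · have : (j+1) % 2 = 1 := Nat.odd_iff.mp ho
        omega

open Nat in
lemma S_le (n : ℕ) : S n ≤ n := Nat.digit_sum_le 2 n

open Nat in
lemma legendre2 (n : ℕ) : padicValNat 2 (n !) = n - S n := by
  have := @sub_one_mul_padicValNat_factorial 2 ⟨Nat.prime_two⟩ n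
  simpa [S] using this

open Nat in
lemma S_add_le (a b : ℕ) : S (a + b) ≤ S a + S b := by
  have hd : a ! * b ! ∣ (a + b)! := Nat.factorial_mul_factorial_dvd_factorial_add a b
  have h1 : padicValNat 2 (a ! * b !) = padicValNat 2 (a !) + padicValNat 2 (b !) :=
    padicValNat.mul (Nat.factorial_ne_zero a) (Nat.factorial_ne_zero b)
  have h2 : padicValNat 2 (a ! * b !) ≤ padicValNat 2 ((a + b)!) := by
    obtain ⟨k, hk⟩ := hd
    have hk0 : k ≠ 0 := by
      intro h; rw [h, mul_zero] at hk; exact Nat.factorial_ne_zero (a+b) hk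
    rw [hk, padicValNat.mul (by positivity) hk0]
    exact Nat.le_add_right _ _
  have la := legendre2 a
  have lb := legendre2 b
  have lab := legendre2 (a + b)
  have sa := S_le a
  have sb := S_le b
  have sab := S_le (a+b)
  omega

set_option linter.unusedSectionVars false

section Val
variable {K : Type*} [Field K] [CharZero K] (v : K → WithTop ℚ)
variable (hv0 : ∀ x : K, v x = ⊤ ↔ x = 0)
variable (hvmul : ∀ x y : K, v (x * y) = v x + v y)
variable (hvadd : ∀ x y : K, min (v x) (v y) ≤ v (x + y))
variable (hv2 : v 2 = 1)

-- WithTop ℚ helpers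
lemma wt_self_add_self {a : WithTop ℚ} {q : ℚ} (h : a + a = (q : WithTop ℚ)) :
    a = ((q/2 : ℚ) : WithTop ℚ) := by
  cases a with
  | top => simp at h
  | coe r =>
    rw [← WithTop.coe_add] at h
    have : r + r = q := WithTop.coe_injective h
    have : r = q / 2 := by linarith
    rw [this]

lemma wt_sub_le {a : WithTop ℚ} {q r : ℚ} (h : ((q : ℚ) : WithTop ℚ) ≤ a + (r : ℚ)) :
    (((q - r : ℚ)) : WithTop ℚ) ≤ a := by
  cases a with
  | top => exact le_top
  | coe s =>
    rw [← WithTop.coe_add, WithTop.coe_le_coe] at h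
    exact WithTop.coe_le_coe.mpr (by linarith)

include hv0

lemma v_ne_top {x : K} (hx : x ≠ 0) : v x ≠ ⊤ := fun h => hx ((hv0 x).mp h)

lemma v_top : v (0 : K) = ⊤ := (hv0 0).mpr rfl

lemma v_ne_zero {x : K} {q : ℚ} (hx : v x = (q : WithTop ℚ)) : x ≠ 0 := by
  intro h; rw [h, v_top v hv0] at hx; exact (WithTop.top_ne_coe) hx

include hvmul

lemma v_one : v (1 : K) = 0 := by
  have h := hvmul 1 1
  rw [one_mul] at h
  have hne : v (1 : K) ≠ ⊤ := v_ne_top v hv0 one_ne_zero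
  cases hvone : v (1 : K) with
  | top => exact absurd hvone hne
  | coe q =>
    rw [hvone, ← WithTop.coe_add] at h
    have : q = q + q := WithTop.coe_injective h
    have : q = 0 := by linarith
    simp [this]

lemma v_neg_one : v (-1 : K) = 0 := by
  have h := hvmul (-1) (-1)
  rw [neg_one_mul, neg_neg, v_one v hv0 hvmul] at h
  have := wt_self_add_self h.symm
  simpa using this

lemma v_neg (x : K) : v (-x) = v x := by
  have h := hvmul (-1) x
  rw [neg_one_mul, v_neg_one v hv0 hvmul, zero_add] at h
  exact h

lemma v_inv {x : K} (hx : x ≠ 0) : v x + v x⁻¹ = 0 := by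
  have h := hvmul x x⁻¹
  rw [mul_inv_cancel₀ hx, v_one v hv0 hvmul] at h
  exact h.symm

lemma v_inv_eq {x : K} {q : ℚ} (hx : v x = (q : WithTop ℚ)) :
    v x⁻¹ = ((-q : ℚ) : WithTop ℚ) := by
  have hxne := v_ne_zero v hv0 hx
  have h := v_inv v hv0 hvmul hxne
  rw [hx] at h
  cases hv : v x⁻¹ with
  | top => rw [hv] at h; simp at h
  | coe r =>
    rw [hv, ← WithTop.coe_add] at h
    have h1 : q + r = 0 := by exact_mod_cast h
    have h2 : r = -q := by linarith
    rw [h2]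

lemma v_div_eq {x y : K} {q r : ℚ} (hx : v x = (q : WithTop ℚ)) (hy : v y = (r : WithTop ℚ)) :
    v (x / y) = ((q - r : ℚ) : WithTop ℚ) := by
  rw [div_eq_mul_inv, hvmul, hx, v_inv_eq v hv0 hvmul hy, ← WithTop.coe_add]
  congr 1; ring


include hv2

lemma v_two_pow (k : ℕ) : v ((2:K)^k) = ((k : ℚ) : WithTop ℚ) := by
  induction k with
  | zero => simpa using v_one v hv0 hvmul
  | succ k ih =>
    rw [pow_succ, hvmul, ih, hv2]
    norm_cast

lemma v_half : v ((2:K)⁻¹) = (((-1 : ℚ)) : WithTop ℚ) := by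
  have h := v_inv v hv0 hvmul (two_ne_zero (α := K))
  rw [hv2] at h
  cases hv : v ((2:K)⁻¹) with
  | top => rw [hv] at h; simp at h
  | coe q =>
    rw [hv, ← WithTop.coe_one, ← WithTop.coe_add] at h
    have : (1 : ℚ) + q = 0 := by exact_mod_cast h
    have : q = -1 := by linarith
    rw [this]

lemma v_div_two (x : K) {q : ℚ} (hx : v x = (q : WithTop ℚ)) :
    v (x / 2) = ((q - 1 : ℚ) : WithTop ℚ) := by
  rw [div_eq_mul_inv, hvmul, hx, v_half v hv0 hvmul hv2, ← WithTop.coe_add]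
  congr 1
  ring


lemma v_half_lt {x : K} {q : ℚ} (h : (q : WithTop ℚ) < v x) :
    ((q - 1 : ℚ) : WithTop ℚ) < v (x / 2) := by
  rw [div_eq_mul_inv, hvmul x, v_half v hv0 hvmul hv2]
  have he : ((q - 1 : ℚ) : WithTop ℚ) = (q : WithTop ℚ) + ((-1 : ℚ) : WithTop ℚ) := by
    rw [← WithTop.coe_add]; congr 1; ring
  rw [he]
  exact WithTop.add_lt_add_right (by simp) h

omit hv2
include hvadd

lemma v_sub_min (x y : K) : min (v x) (v y) ≤ v (x - y) := by
  have := hvadd x (-y)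
  rw [v_neg v hv0 hvmul] at this
  simpa [sub_eq_add_neg] using this

/-- ultrametric equality: if v (a - b) > v b then v a = v b -/
lemma v_eq_of_gt {a b : K} (h : v b < v (a - b)) : v a = v b := by
  have h1 : v b ≤ v a := by
    have := hvadd (a - b) b
    rw [sub_add_cancel] at this
    calc v b = min (v (a-b)) (v b) := (min_eq_right h.le).symm
    _ ≤ v a := this
  rcases lt_or_eq_of_le h1 with hlt | heq
  · exfalso
    have h2 := v_sub_min v hv0 hvmul hvadd a (a - b)
    have : a - (a - b) = b := by ring
    rw [this] at h2
    have : v b < min (v a) (v (a - b)) := lt_min hlt h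
    exact absurd (this.trans_le h2) (lt_irrefl _)
  · exact heq.symm

/-- strict lower bound on valuation of a finite sum -/
lemma v_sum_lt {α : Type*} (s : Finset α) (f : α → K) (q : ℚ)
    (h : ∀ j ∈ s, (q : WithTop ℚ) < v (f j)) :
    (q : WithTop ℚ) < v (∑ j ∈ s, f j) := by
  classical
  induction s using Finset.cons_induction with
  | empty => rw [Finset.sum_empty, v_top v hv0]; exact WithTop.coe_lt_top q
  | cons a s ha ih =>
    rw [Finset.sum_cons]
    have h1 := h a (Finset.mem_cons_self a s)
    have h2 := ih (fun j hj => h j (Finset.mem_cons_of_mem hj))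
    calc (q : WithTop ℚ) < min (v (f a)) (v (∑ j ∈ s, f j)) := lt_min h1 h2
    _ ≤ _ := hvadd _ _

lemma v_i {i : K} (hi : i ^ 2 = -1) : v i = 0 := by
  have h : v i + v i = (0 : ℚ) := by
    have := hvmul i i
    rw [← pow_two, hi, v_neg_one v hv0 hvmul] at this
    exact_mod_cast this.symm
  have := wt_self_add_self h
  simpa using this

end Val

noncomputable def rt {K : Type*} [Field K] (c : ℕ → K) : ℕ → K
  | 0 => 1
  | (ℓ+1) => (c (ℓ+1) - ∑ j ∈ (Finset.Ioo 0 (ℓ+1)).attach,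
      rt c j.1 * rt c (ℓ+1 - j.1)) / 2
  decreasing_by
  · exact (Finset.mem_Ioo.mp j.2).2
  · have := Finset.mem_Ioo.mp j.2; omega

lemma rt_zero {K : Type*} [Field K] (c : ℕ → K) : rt c 0 = 1 := by rw [rt]

lemma rt_succ {K : Type*} [Field K] (c : ℕ → K) (ℓ : ℕ) :
    rt c (ℓ+1) = (c (ℓ+1) - ∑ j ∈ Finset.Ioo 0 (ℓ+1), rt c j * rt c (ℓ+1 - j)) / 2 := by
  rw [rt]; congr 1; rw [sub_right_inj]; exact Finset.sum_attach (Finset.Ioo 0 (ℓ+1)) (fun j => rt c j * rt c (ℓ+1-j))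

open PowerSeries in
lemma rt_sq {K : Type*} [Field K] [CharZero K] (γ : PowerSeries K)
    (hc0 : coeff (R := K) 0 γ = 1) :
    (PowerSeries.mk (rt (fun ℓ => coeff (R := K) ℓ γ)))^2 = γ := by
  set c : ℕ → K := fun ℓ => coeff (R := K) ℓ γ with hc
  ext ℓ
  rw [pow_two, coeff_mul]
  cases ℓ with
  | zero => simp [rt_zero, hc0]
  | succ ℓ =>
    rw [Finset.Nat.sum_antidiagonal_eq_sum_range_succ_mk]
    have hdec : Finset.range (ℓ+2) = insert 0 (insert (ℓ+1) (Finset.Ioo 0 (ℓ+1))) := by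
      ext x
      simp only [Finset.mem_range, Finset.mem_insert, Finset.mem_Ioo]
      omega
    rw [hdec, Finset.sum_insert (by simp), Finset.sum_insert (by simp)]
    simp only [coeff_mk, Nat.sub_self, Nat.sub_zero, rt_zero, one_mul, mul_one]
    have h2 : (2 : K) ≠ 0 := two_ne_zero
    have := rt_succ c ℓ
    have : rt c (ℓ+1) * 2 = c (ℓ+1) - ∑ j ∈ Finset.Ioo 0 (ℓ+1), rt c j * rt c (ℓ+1 - j) := by
      rw [rt_succ c ℓ]; field_simp
    have goal : rt c (ℓ+1) + (rt c (ℓ+1) + ∑ j ∈ Finset.Ioo 0 (ℓ+1), rt c j * rt c (ℓ+1-j)) = c (ℓ+1) := by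
      linear_combination this
    exact goal

section Step
open PowerSeries

variable {K : Type*} [Field K] [CharZero K]

def Hyp (v : K → WithTop ℚ) (i : K) (n : ℕ) (γ : PowerSeries K) : Prop :=
  coeff (R := K) 0 γ = 1 ∧
  v (coeff (R := K) 2 γ) = ((n : ℚ) : WithTop ℚ) ∧
  (((n : ℚ) + 2 : ℚ) : WithTop ℚ) ≤ v ((coeff (R := K) 1 γ) ^ 2 / coeff (R := K) 2 γ - 2 ^ (n + 1) * i) ∧
  ∀ ℓ : ℕ, 3 ≤ ℓ → (((n : ℚ) + (S ℓ : ℚ) / 2 : ℚ) : WithTop ℚ) < v (coeff (R := K) ℓ γ)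

lemma step (v : K → WithTop ℚ)
    (hv0 : ∀ x : K, v x = ⊤ ↔ x = 0)
    (hvmul : ∀ x y : K, v (x * y) = v x + v y)
    (hvadd : ∀ x y : K, min (v x) (v y) ≤ v (x + y))
    (hv2 : v 2 = 1)
    (i : K) (hi : i ^ 2 = -1)
    (n : ℕ) (hn : 3 ≤ n) (γ : PowerSeries K) (H : Hyp v i n γ) :
    ∃ δ : PowerSeries K, δ ^ 2 = γ ∧ Hyp v i (n - 1) δ := by
  obtain ⟨hc0, hc2, hc12, hcl⟩ := H
  set c : ℕ → K := fun ℓ => coeff (R := K) ℓ γ with hc_def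
  have hδ : (PowerSeries.mk (rt c)) ^ 2 = γ := rt_sq γ hc0
  have hnQ : (3:ℚ) ≤ (n:ℚ) := by exact_mod_cast hn
  have hvi : v i = 0 := v_i v hv0 hvmul hvadd hi
  have hc2ne : c 2 ≠ 0 := v_ne_zero v hv0 hc2
  set u : K := c 1 ^ 2 / c 2 with hu_def
  -- valuation of 2^(n+1) i
  have hvT : v ((2:K)^(n+1) * i) = (((n:ℚ)+1 : ℚ) : WithTop ℚ) := by
    rw [hvmul, v_two_pow v hv0 hvmul hv2, hvi, add_zero]
    norm_cast
  have hvu : v u = (((n:ℚ)+1 : ℚ) : WithTop ℚ) := by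
    rw [← hvT]
    apply v_eq_of_gt v hv0 hvmul hvadd
    rw [hvT]
    refine lt_of_lt_of_le ?_ hc12
    exact WithTop.coe_lt_coe.mpr (by linarith)
  have hc1sq : c 1 ^ 2 = u * c 2 := (div_mul_cancel₀ _ hc2ne).symm
  have hvc1 : v (c 1) = (((2*(n:ℚ)+1)/2 : ℚ) : WithTop ℚ) := by
    apply wt_self_add_self
    have h : v (c 1) + v (c 1) = v (c 1 ^ 2) := by rw [pow_two, hvmul]
    rw [h, hc1sq, hvmul, hvu, hc2, ← WithTop.coe_add]
    congr 1; ring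
  -- coefficient 1
  have hd1 : rt c 1 = c 1 / 2 := by
    rw [rt_succ c 0]
    norm_num [show Finset.Ioo 0 1 = (∅ : Finset ℕ) from rfl]
  have hvd1 : v (rt c 1) = (((2*(n:ℚ)+1)/2 - 1 : ℚ) : WithTop ℚ) := by
    rw [hd1]; exact v_div_two v hv0 hvmul hv2 _ hvc1
  -- coefficient 2
  have hd2 : rt c 2 = (c 2 - rt c 1 * rt c 1) / 2 := by
    rw [show (2:ℕ) = 1 + 1 from rfl, rt_succ,
      show Finset.Ioo 0 2 = ({1} : Finset ℕ) from rfl, Finset.sum_singleton]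
  set w : K := 1 - u / 4 with hw_def
  have h4 : v (4:K) = ((2:ℚ) : WithTop ℚ) := by
    rw [show (4:K) = 2^2 by norm_num, v_two_pow v hv0 hvmul hv2]
    norm_num
  have hvu4 : v (u/4) = (((n:ℚ)-1 : ℚ) : WithTop ℚ) := by
    rw [v_div_eq v hv0 hvmul hvu h4]
    congr 1; ring
  have hvw : v w = ((0:ℚ) : WithTop ℚ) := by
    have h1 : v w = v (1:K) := by
      apply v_eq_of_gt v hv0 hvmul hvadd
      rw [show w - 1 = -(u/4) by rw [hw_def]; ring, v_neg v hv0 hvmul, hvu4,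
        v_one v hv0 hvmul]
      exact_mod_cast WithTop.coe_lt_coe.mpr (show (0:ℚ) < (n:ℚ)-1 by linarith)
    rw [h1, v_one v hv0 hvmul]; norm_cast
  have hwne : w ≠ 0 := v_ne_zero v hv0 hvw
  have hd2w : rt c 2 = c 2 * w / 2 := by
    rw [hd2, hd1, hw_def, hu_def]
    field_simp
    ring
  have hvd2 : v (rt c 2) = (((n:ℚ)-1 : ℚ) : WithTop ℚ) := by
    rw [hd2w]
    rw [v_div_two v hv0 hvmul hv2 _ (show v (c 2 * w) = ((n:ℚ) : WithTop ℚ) from by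
      rw [hvmul, hc2, hvw, ← WithTop.coe_add]; norm_num)]
  have hd2ne : rt c 2 ≠ 0 := v_ne_zero v hv0 hvd2
  -- coefficient 1 and 2 combined
  have hu' : rt c 1 ^ 2 / rt c 2 = u / (2 * w) := by
    rw [hd1, hd2w, hu_def]
    field_simp
  have hkey1 : (rt c 1 ^ 2 / rt c 2 - 2^n * i) * (2 * w) = u - 2^(n+1) * i * w := by
    rw [hu']
    field_simp
    ring
  have hkey2 : u - 2^(n+1) * i * w = (u - 2^(n+1) * i) + 2^(n+1) * i * (u/4) := by
    rw [hw_def]; ring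
  have hB : v (2^(n+1) * i * (u/4)) = ((2*(n:ℚ) : ℚ) : WithTop ℚ) := by
    rw [hvmul, hvT, hvu4, ← WithTop.coe_add]
    congr 1; ring
  have hv2w : v (2 * w) = ((1:ℚ) : WithTop ℚ) := by
    rw [hvmul, hv2, hvw, ← WithTop.coe_one, ← WithTop.coe_add]
    norm_num
  have hRHS : (((n:ℚ)+2 : ℚ) : WithTop ℚ) ≤ v ((u - 2^(n+1) * i) + 2^(n+1) * i * (u/4)) := by
    refine le_trans (le_min hc12 ?_) (hvadd _ _)
    rw [hB]
    exact WithTop.coe_le_coe.mpr (by linarith)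
  have hfin12 : (((n:ℚ)+1 : ℚ) : WithTop ℚ) ≤ v (rt c 1 ^ 2 / rt c 2 - 2^n * i) := by
    have h5 : (((n:ℚ)+2 : ℚ) : WithTop ℚ) ≤ v (rt c 1 ^ 2 / rt c 2 - 2^n * i) + ((1:ℚ) : WithTop ℚ) := by
      rw [← hv2w, ← hvmul, hkey1, hkey2]
      exact hRHS
    have h6 := wt_sub_le h5
    convert h6 using 2
    ring
  -- the main inductive bound
  have main : ∀ ℓ : ℕ,
      (1 ≤ ℓ → (((n:ℚ) - 1 + (S ℓ:ℚ)/2 - (if ℓ = 2 then 1/2 else 0) : ℚ) : WithTop ℚ) ≤ v (rt c ℓ)) ∧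
      (3 ≤ ℓ → (((n:ℚ) - 1 + (S ℓ:ℚ)/2 : ℚ) : WithTop ℚ) < v (rt c ℓ)) := by
    intro ℓ
    induction ℓ using Nat.strong_induction_on with
    | _ ℓ ih =>
      have strict : 3 ≤ ℓ → (((n:ℚ) - 1 + (S ℓ:ℚ)/2 : ℚ) : WithTop ℚ) < v (rt c ℓ) := by
        intro hℓ3
        obtain ⟨m, rfl⟩ : ∃ m, ℓ = m + 1 := ⟨ℓ - 1, by omega⟩
        have hsum : (((n:ℚ) + (S (m+1):ℚ)/2 : ℚ) : WithTop ℚ) <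
            v (∑ j ∈ Finset.Ioo 0 (m+1), rt c j * rt c (m+1-j)) := by
          apply v_sum_lt v hv0 hvmul hvadd
          intro j hj
          obtain ⟨hj0, hjm⟩ := Finset.mem_Ioo.mp hj
          have hk1 : 1 ≤ m + 1 - j := by omega
          have hjk : j + (m + 1 - j) = m + 1 := by omega
          have B1 := (ih j (by omega)).1 (by omega)
          have B2 := (ih (m+1-j) (by omega)).1 hk1
          have hSsplit : (S (m+1) : ℚ) ≤ (S j : ℚ) + (S (m+1-j) : ℚ) := by
            have h := S_add_le j (m+1-j)
            rw [hjk] at h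
            exact_mod_cast h
          have hSj : (1:ℚ) ≤ (S j:ℚ) := by exact_mod_cast S_pos (by omega)
          have hSk : (1:ℚ) ≤ (S (m+1-j):ℚ) := by exact_mod_cast S_pos hk1
          have hQ : ((n:ℚ) + (S (m+1):ℚ)/2) <
              ((n:ℚ) - 1 + (S j:ℚ)/2 - (if j = 2 then 1/2 else 0)) +
              ((n:ℚ) - 1 + (S (m+1-j):ℚ)/2 - (if m+1-j = 2 then 1/2 else 0)) := by
            by_cases hb : j = 2 ∧ m+1-j = 2
            · obtain ⟨h1, h2⟩ := hb
              subst h1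
              have hm4 : m = 3 := by omega
              subst hm4
              norm_num [S_two, S_four]
              linarith
            · have hε : (if j = 2 then (1/2:ℚ) else 0) + (if m+1-j = 2 then (1/2:ℚ) else 0) ≤ 1/2 := by
                have hor : ¬(j = 2) ∨ ¬(m+1-j = 2) := by tauto
                rcases hor with h | h
                · rw [if_neg h]; split_ifs <;> norm_num
                · rw [if_neg h]; split_ifs <;> norm_num
              linarith
          refine lt_of_lt_of_le (WithTop.coe_lt_coe.mpr hQ) ?_
          rw [hvmul, WithTop.coe_add]
          exact add_le_add B1 B2
        have hcc : (((n:ℚ) + (S (m+1):ℚ)/2 : ℚ) : WithTop ℚ) < v (c (m+1)) := hcl (m+1) hℓ3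
        have hdiff : (((n:ℚ) + (S (m+1):ℚ)/2 : ℚ) : WithTop ℚ) <
            v (c (m+1) - ∑ j ∈ Finset.Ioo 0 (m+1), rt c j * rt c (m+1-j)) :=
          lt_of_lt_of_le (lt_min hcc hsum) (v_sub_min v hv0 hvmul hvadd _ _)
        have hfin := v_half_lt v hv0 hvmul hv2 hdiff
        rw [rt_succ]
        convert hfin using 2
        ring
      refine ⟨?_, strict⟩
      intro h1
      rcases Nat.lt_or_ge ℓ 3 with h3 | h3
      · interval_cases ℓ
        · rw [hvd1, S_one, if_neg (by omega)]
          exact WithTop.coe_le_coe.mpr (by push_cast; linarith)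
        · rw [hvd2, S_two, if_pos rfl]
          exact WithTop.coe_le_coe.mpr (by push_cast; linarith)
      · have h := strict h3
        rw [if_neg (by omega)]
        refine le_of_lt ?_
        convert h using 2
        ring
  -- assemble the conclusion
  have hcast : (((n-1:ℕ):ℚ)) = (n:ℚ) - 1 := by
    have h1 : 1 ≤ n := by omega
    push_cast [h1]
    ring
  refine ⟨PowerSeries.mk (rt c), hδ, ?_, ?_, ?_, ?_⟩
  · rw [coeff_mk, rt_zero]
  · rw [coeff_mk, hvd2, hcast]
  · rw [coeff_mk, coeff_mk]
    have hpow : (2:K) ^ ((n-1) + 1) = 2 ^ n := by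
      congr 1
      omega
    rw [hpow, hcast]
    have he : (((n:ℚ) - 1 + 2 : ℚ) : WithTop ℚ) = (((n:ℚ) + 1 : ℚ) : WithTop ℚ) := by
      congr 1; ring
    rw [he]
    exact hfin12
  · intro ℓ hℓ
    rw [coeff_mk, hcast]
    exact (main ℓ).2 hℓ




lemma iterate_step (v : K → WithTop ℚ)
    (hv0 : ∀ x : K, v x = ⊤ ↔ x = 0)
    (hvmul : ∀ x y : K, v (x * y) = v x + v y)
    (hvadd : ∀ x y : K, min (v x) (v y) ≤ v (x + y))
    (hv2 : v 2 = 1)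
    (i : K) (hi : i ^ 2 = -1) :
    ∀ n : ℕ, 2 ≤ n → ∀ γ : PowerSeries K, Hyp v i n γ →
    ∃ δ : PowerSeries K, δ ^ (2^(n-2)) = γ ∧ Hyp v i 2 δ := by
  intro n hn γ Hγ
  induction n, hn using Nat.le_induction generalizing γ with
  | base =>
    exact ⟨γ, by norm_num, Hγ⟩
  | succ n hn ih =>
    obtain ⟨γ', hγ', H'⟩ := step v hv0 hvmul hvadd hv2 i hi (n+1) (by omega) γ Hγ
    have Hn : Hyp v i n γ' := by simpa using H'
    obtain ⟨δ, hδ, H2⟩ := ih γ' Hn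
    refine ⟨δ, ?_, H2⟩
    have hp : 2^((n+1)-2) = 2^(n-2) * 2 := by
      rw [← pow_succ]
      congr 1
      omega
    rw [hp, pow_mul, hδ, hγ']

end Step

theorem stmt_11 (K : Type*) [Field K] [CharZero K] (v : K → WithTop ℚ)
    (hv0 : ∀ x : K, v x = ⊤ ↔ x = 0)
    (hvmul : ∀ x y : K, v (x * y) = v x + v y)
    (hvadd : ∀ x y : K, min (v x) (v y) ≤ v (x + y))
    (hv2 : v 2 = 1)
    (i : K) (hi : i ^ 2 = -1)
    (n : ℕ) (hn : 3 ≤ n)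
    (γ : PowerSeries K)
    (hc0 : PowerSeries.coeff (R := K) 0 γ = 1)
    (hc2 : v (PowerSeries.coeff (R := K) 2 γ) = ((n : ℚ) : WithTop ℚ))
    (hc12 : (((n : ℚ) + 2 : ℚ) : WithTop ℚ) ≤
      v ((PowerSeries.coeff (R := K) 1 γ) ^ 2 / PowerSeries.coeff (R := K) 2 γ - 2 ^ (n + 1) * i))
    (hcl : ∀ ℓ : ℕ, 3 ≤ ℓ →
      (((n : ℚ) + (S ℓ : ℚ) / 2 : ℚ) : WithTop ℚ) < v (PowerSeries.coeff (R := K) ℓ γ)) :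
    ∃ δ : PowerSeries K, δ ^ (2 ^ (n - 2)) = γ ∧
      PowerSeries.coeff (R := K) 0 δ = 1 ∧
      v (PowerSeries.coeff (R := K) 2 δ) = ((2 : ℚ) : WithTop ℚ) ∧
      (((4 : ℚ)) : WithTop ℚ) ≤
        v ((PowerSeries.coeff (R := K) 1 δ) ^ 2 / PowerSeries.coeff (R := K) 2 δ - 8 * i) ∧
      (∀ ℓ : ℕ, 3 ≤ ℓ →
        ((2 + (S ℓ : ℚ) / 2 : ℚ) : WithTop ℚ) < v (PowerSeries.coeff (R := K) ℓ δ)) ∧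
      v (PowerSeries.coeff (R := K) 1 δ) = ((5 / 2 : ℚ) : WithTop ℚ) := by
  obtain ⟨δ, hδ, h0, h2, h12, hl⟩ :=
    iterate_step v hv0 hvmul hvadd hv2 i hi n (by omega) γ ⟨hc0, hc2, hc12, hcl⟩
  have hcast2 : ((((2:ℕ) : ℚ)) : WithTop ℚ) = ((2 : ℚ) : WithTop ℚ) := by norm_num
  have h2' : v (PowerSeries.coeff (R := K) 2 δ) = ((2 : ℚ) : WithTop ℚ) := by rw [h2, hcast2]
  have h12' : ((4 : ℚ) : WithTop ℚ) ≤
      v ((PowerSeries.coeff (R := K) 1 δ) ^ 2 / PowerSeries.coeff (R := K) 2 δ - 8 * i) := by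
    have he : ((2:K) ^ (2+1)) = 8 := by norm_num
    rw [he] at h12
    refine le_trans (le_of_eq ?_) h12
    norm_num
  refine ⟨δ, hδ, h0, h2', h12', ?_, ?_⟩
  · intro ℓ hℓ
    refine lt_of_eq_of_lt ?_ (hl ℓ hℓ)
    norm_num
  · -- v d1 = 5/2
    have hd2ne : PowerSeries.coeff (R := K) 2 δ ≠ 0 := v_ne_zero v hv0 h2'
    have hv8i : v ((8:K) * i) = ((3:ℚ) : WithTop ℚ) := by
      rw [hvmul, show (8:K) = 2^3 by norm_num, v_two_pow v hv0 hvmul hv2,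
        v_i v hv0 hvmul hvadd hi, add_zero]
      norm_num
    have hvu : v ((PowerSeries.coeff (R := K) 1 δ) ^ 2 / PowerSeries.coeff (R := K) 2 δ) = ((3:ℚ) : WithTop ℚ) := by
      rw [← hv8i]
      apply v_eq_of_gt v hv0 hvmul hvadd
      rw [hv8i]
      refine lt_of_lt_of_le ?_ h12'
      exact WithTop.coe_lt_coe.mpr (by norm_num)
    have hsq : (PowerSeries.coeff (R := K) 1 δ) ^ 2 =
        ((PowerSeries.coeff (R := K) 1 δ) ^ 2 / PowerSeries.coeff (R := K) 2 δ) * PowerSeries.coeff (R := K) 2 δ :=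
      (div_mul_cancel₀ _ hd2ne).symm
    apply wt_self_add_self
    have h : v (PowerSeries.coeff (R := K) 1 δ) + v (PowerSeries.coeff (R := K) 1 δ) =
        v ((PowerSeries.coeff (R := K) 1 δ) ^ 2) := by rw [pow_two, hvmul]
    rw [h, hsq, hvmul, hvu, h2', ← WithTop.coe_add]
    norm_num
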